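/- arXiv:1911.10017 — 4 statements merged into one kernel-verified Lean document; each statement's English description precedes it below -/
import Mathlib

section
/- For any complex number z and real α, (1/(2π)) ∫₀^{2π} |ρ(Re(e^{iα} z))|² dα = |z|²/4, where ρ(a) = max(a,0). -/
open Real Complex

lemma g_cont : Continuous (fun x : ℝ => Real.cos x * |Real.cos x|) :=
  Real.continuous_cos.mul Real.continuous_cos.abs

lemma int_cos_abs_zero : ∫ x in (0:ℝ)..(2*π), Real.cos x * |Real.cos x| = 0 := by
  have h1 : ∫ x in (0:ℝ)..π, Real.cos x * |Real.cos x| =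
      - ∫ x in π..(2*π), Real.cos x * |Real.cos x| := by
    have := intervalIntegral.integral_comp_add_right
      (a := (0:ℝ)) (b := π) (fun x => Real.cos x * |Real.cos x|) π
    rw [zero_add, (by ring : π + π = 2*π)] at this
    rw [← this]
    rw [show (∫ x in (0:ℝ)..π, Real.cos (x + π) * |Real.cos (x + π)|)
        = ∫ x in (0:ℝ)..π, -(Real.cos x * |Real.cos x|) by
      apply intervalIntegral.integral_congr
      intro x _
      simp only [Real.cos_add_pi, abs_neg]
      ring]
    rw [intervalIntegral.integral_neg]
    ring
  have h2 := intervalIntegral.integral_add_adjacent_intervals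
    (g_cont.intervalIntegrable (μ := MeasureTheory.volume) (0:ℝ) π) (g_cont.intervalIntegrable π (2*π))
  rw [← h2, h1]; ring

lemma int_cos_abs_shift (θ : ℝ) :
    ∫ α in (0:ℝ)..(2*π), Real.cos (α + θ) * |Real.cos (α + θ)| = 0 := by
  have := intervalIntegral.integral_comp_add_right
    (a := (0:ℝ)) (b := 2*π) (fun x => Real.cos x * |Real.cos x|) θ
  rw [this, zero_add]
  have hper : Function.Periodic (fun x : ℝ => Real.cos x * |Real.cos x|) (2*π) := by
    intro x; simp [Real.cos_add_two_pi]
  rw [show 2*π + θ = θ + 2*π by ring, hper.intervalIntegral_add_eq θ 0, zero_add, int_cos_abs_zero]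

lemma int_cos_sq_shift (θ : ℝ) :
    ∫ α in (0:ℝ)..(2*π), Real.cos (α + θ) ^ 2 = π := by
  have := intervalIntegral.integral_comp_add_right
    (a := (0:ℝ)) (b := 2*π) (fun x => Real.cos x ^ 2) θ
  rw [this, zero_add, integral_cos_sq]
  rw [show 2*π + θ = θ + 2*π by ring, Real.cos_add_two_pi, Real.sin_add_two_pi]
  ring

theorem rectifier_phase_energy (z : ℂ) :
    (1 / (2 * π)) * ∫ α in (0 : ℝ)..(2 * π),
        |max ((Complex.exp (α * Complex.I) * z).re) 0| ^ 2
      = ‖z‖ ^ 2 / 4 := by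
  set r := ‖z‖ with hr
  set θ := Complex.arg z with hθ
  have hre : ∀ α : ℝ, (Complex.exp (α * Complex.I) * z).re = r * Real.cos (α + θ) := by
    intro α
    conv_lhs => rw [← Complex.norm_mul_exp_arg_mul_I z]
    rw [show Complex.exp (α * Complex.I) * (↑‖z‖ * Complex.exp (↑(Complex.arg z) * Complex.I))
        = ↑‖z‖ * Complex.exp ((↑α + ↑(Complex.arg z)) * Complex.I) by
      rw [add_mul, Complex.exp_add]; ring]
    simp [Complex.exp_re, Complex.exp_im, Complex.cos_ofReal_re, hr, hθ]
  have hr0 : 0 ≤ r := norm_nonneg z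
  have key : ∀ α : ℝ, |max ((Complex.exp (α * Complex.I) * z).re) 0| ^ 2
      = r^2/2 * (Real.cos (α + θ) ^ 2 + Real.cos (α + θ) * |Real.cos (α + θ)|) := by
    intro α
    rw [hre α, _root_.abs_of_nonneg (le_max_right _ _)]
    rcases le_or_gt 0 (Real.cos (α + θ)) with h | h
    · rw [max_eq_left (by positivity), _root_.abs_of_nonneg h]; ring
    · rw [max_eq_right, _root_.abs_of_neg h]
      · ring
      · exact mul_nonpos_of_nonneg_of_nonpos hr0 h.le
  rw [intervalIntegral.integral_congr (fun α _ => key α)]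
  have hint1 : IntervalIntegrable (fun α => Real.cos (α + θ) ^ 2) MeasureTheory.volume 0 (2*π) :=
    (((Real.continuous_cos.comp (continuous_id.add continuous_const)).pow 2)).intervalIntegrable _ _
  have hint2 : IntervalIntegrable (fun α => Real.cos (α + θ) * |Real.cos (α + θ)|) MeasureTheory.volume 0 (2*π) :=
    (g_cont.comp (continuous_id.add continuous_const)).intervalIntegrable _ _
  rw [intervalIntegral.integral_const_mul, intervalIntegral.integral_add hint1 hint2,
    int_cos_sq_shift, int_cos_abs_shift, add_zero]
  have hπ : (π : ℝ) ≠ 0 := Real.pi_ne_zero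
  field_simp
  ring
end

section
/- For any complex numbers z, z': (1/8)|z - z'|² ≤ (1/(2π)) ∫₀^{2π} |ρ(Re(e^{iα} z)) - ρ(Re(e^{iα} z'))|² dα ≤ (1/4)|z - z'|², where ρ(a) = max(a,0). -/
open Real Complex

private lemma ptwise (a b : ℝ) :
    (max a 0 - max b 0) ^ 2 + (max (-a) 0 - max (-b) 0) ^ 2 ≤ (a - b) ^ 2 ∧
    (a - b) ^ 2 ≤ 2 * ((max a 0 - max b 0) ^ 2 + (max (-a) 0 - max (-b) 0) ^ 2) := by
  set u := max a 0 - max b 0 with hu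
  set v := max (-a) 0 - max (-b) 0 with hv
  have hab : a - b = u - v := by
    have ha : max a 0 - max (-a) 0 = a := by
      rcases le_total a 0 with h | h
      · rw [max_eq_right h, max_eq_left (by linarith)]; ring
      · rw [max_eq_left h, max_eq_right (by linarith)]; ring
    have hb : max b 0 - max (-b) 0 = b := by
      rcases le_total b 0 with h | h
      · rw [max_eq_right h, max_eq_left (by linarith)]; ring
      · rw [max_eq_left h, max_eq_right (by linarith)]; ring
    rw [hu, hv]; linarith
  have huv : u * v ≤ 0 := by
    rcases le_total a 0 with ha | ha <;> rcases le_total b 0 with hb | hb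
    · have : u = 0 := by rw [hu, max_eq_right ha, max_eq_right hb]; ring
      simp [this]
    · have h1 : u = -b := by rw [hu, max_eq_right ha, max_eq_left hb]; ring
      have h2 : v = -a := by rw [hv, max_eq_left (by linarith), max_eq_right (by linarith)]; ring
      rw [h1, h2]; nlinarith
    · have h1 : u = a := by rw [hu, max_eq_left ha, max_eq_right hb]; ring
      have h2 : v = b := by rw [hv, max_eq_right (by linarith), max_eq_left (by linarith)]; ring
      rw [h1, h2]; nlinarith
    · have : v = 0 := by
        rw [hv, max_eq_right (by linarith), max_eq_right (by linarith)]; ring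
      simp [this]
  constructor
  · rw [hab]; nlinarith [huv]
  · rw [hab]; nlinarith [sq_nonneg (u + v), huv]

theorem rectifier_phase_bilipschitz (z z' : ℂ) :
    (1 / 8) * ‖z - z'‖ ^ 2 ≤
      (1 / (2 * π)) * ∫ α in (0 : ℝ)..(2 * π),
        |max ((Complex.exp (α * Complex.I) * z).re) 0 -
          max ((Complex.exp (α * Complex.I) * z').re) 0| ^ 2 ∧
    (1 / (2 * π)) * (∫ α in (0 : ℝ)..(2 * π),
        |max ((Complex.exp (α * Complex.I) * z).re) 0 -
          max ((Complex.exp (α * Complex.I) * z').re) 0| ^ 2) ≤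
      (1 / 4) * ‖z - z'‖ ^ 2 := by
  set w := z - z' with hw
  set g : ℝ → ℝ := fun α =>
    (max ((Complex.exp (α * Complex.I) * z).re) 0 -
      max ((Complex.exp (α * Complex.I) * z').re) 0) ^ 2 with hg
  have habs : (∫ α in (0 : ℝ)..(2 * π),
      |max ((Complex.exp (α * Complex.I) * z).re) 0 -
        max ((Complex.exp (α * Complex.I) * z').re) 0| ^ 2) = ∫ α in (0 : ℝ)..(2 * π), g α := by
    simp [hg, sq_abs]
  -- continuity
  have hcont : ∀ ζ : ℂ, Continuous fun α : ℝ => (Complex.exp (α * Complex.I) * ζ).re := by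
    intro ζ
    fun_prop
  have hgc : Continuous g := by
    apply Continuous.pow
    exact ((hcont z).max continuous_const).sub ((hcont z').max continuous_const)
  -- periodicity
  have hper : Function.Periodic g (2 * π) := by
    intro α
    have : Complex.exp (↑(α + 2 * π) * Complex.I) = Complex.exp (↑α * Complex.I) := by
      push_cast
      rw [add_mul, Complex.exp_add, Complex.exp_two_pi_mul_I, mul_one]
    simp only [hg, this]
  -- shift
  have hshift : (∫ α in (0 : ℝ)..(2 * π), g (α + π)) = ∫ α in (0 : ℝ)..(2 * π), g α := by
    have h := hper.intervalIntegral_add_eq π 0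
    rw [intervalIntegral.integral_comp_add_right g π, show (0:ℝ) + π = π by ring,
      show 2 * π + π = π + 2 * π by ring, h, zero_add]
  -- key pointwise facts
  have hre : ∀ (α : ℝ) (ζ : ℂ), (Complex.exp (↑(α + π) * Complex.I) * ζ).re
      = -((Complex.exp (↑α * Complex.I) * ζ).re) := by
    intro α ζ
    have : Complex.exp (↑(α + π) * Complex.I) = -Complex.exp (↑α * Complex.I) := by
      push_cast
      rw [add_mul, Complex.exp_add, Complex.exp_pi_mul_I, mul_neg_one]
    rw [this]
    simp
  have hsub : ∀ α : ℝ, (Complex.exp (↑α * Complex.I) * w).re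
      = (Complex.exp (↑α * Complex.I) * z).re - (Complex.exp (↑α * Complex.I) * z').re := by
    intro α
    rw [hw, mul_sub, Complex.sub_re]
  -- integrable functions
  have hgi : IntervalIntegrable g MeasureTheory.volume 0 (2 * π) :=
    hgc.intervalIntegrable 0 (2 * π)
  have hgi' : IntervalIntegrable (fun α => g (α + π)) MeasureTheory.volume 0 (2 * π) :=
    (hgc.comp (continuous_id.add continuous_const)).intervalIntegrable 0 (2 * π)
  have hJc : Continuous fun α : ℝ => ((Complex.exp (↑α * Complex.I) * w).re) ^ 2 :=
    (hcont w).pow 2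
  have hJi : IntervalIntegrable (fun α => ((Complex.exp (↑α * Complex.I) * w).re) ^ 2)
      MeasureTheory.volume 0 (2 * π) := hJc.intervalIntegrable 0 (2 * π)
  -- compute J
  have hJ : (∫ α in (0 : ℝ)..(2 * π), ((Complex.exp (↑α * Complex.I) * w).re) ^ 2)
      = π * ‖w‖ ^ 2 := by
    have hptw : ∀ α : ℝ, ((Complex.exp (↑α * Complex.I) * w).re) ^ 2
        = w.re ^ 2 * Real.cos α ^ 2 - (2 * w.re * w.im) * (Real.sin α * Real.cos α)
          + w.im ^ 2 * Real.sin α ^ 2 := by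
      intro α
      rw [Complex.mul_re, Complex.exp_ofReal_mul_I_re, Complex.exp_ofReal_mul_I_im]
      ring
    rw [intervalIntegral.integral_congr (g := fun α => w.re ^ 2 * Real.cos α ^ 2
      - (2 * w.re * w.im) * (Real.sin α * Real.cos α) + w.im ^ 2 * Real.sin α ^ 2)
      (fun α _ => hptw α)]
    have hc2 : IntervalIntegrable (fun α => w.re ^ 2 * Real.cos α ^ 2)
        MeasureTheory.volume 0 (2 * π) := (Continuous.intervalIntegrable (by fun_prop) _ _)
    have hsc : IntervalIntegrable (fun α => (2 * w.re * w.im) * (Real.sin α * Real.cos α))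
        MeasureTheory.volume 0 (2 * π) := (Continuous.intervalIntegrable (by fun_prop) _ _)
    have hs2 : IntervalIntegrable (fun α => w.im ^ 2 * Real.sin α ^ 2)
        MeasureTheory.volume 0 (2 * π) := (Continuous.intervalIntegrable (by fun_prop) _ _)
    rw [intervalIntegral.integral_add (hc2.sub hsc) hs2, intervalIntegral.integral_sub hc2 hsc,
      intervalIntegral.integral_const_mul, intervalIntegral.integral_const_mul,
      intervalIntegral.integral_const_mul, integral_cos_sq, integral_sin_sq,
      integral_sin_mul_cos₁, Complex.sq_norm, Complex.normSq_apply]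
    simp [Real.sin_two_pi, Real.cos_two_pi]
    ring
  set I0 := ∫ α in (0 : ℝ)..(2 * π), g α with hI0
  -- sum integral
  have hsum : (∫ α in (0 : ℝ)..(2 * π), (g α + g (α + π))) = 2 * I0 := by
    rw [intervalIntegral.integral_add hgi hgi', hshift]; ring
  -- pointwise bounds
  have hpt1 : ∀ α ∈ Set.Icc (0 : ℝ) (2 * π),
      g α + g (α + π) ≤ ((Complex.exp (↑α * Complex.I) * w).re) ^ 2 := by
    intro α _
    have h := (ptwise ((Complex.exp (↑α * Complex.I) * z).re)
      ((Complex.exp (↑α * Complex.I) * z').re)).1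
    simp only [hg]
    rw [hre α z, hre α z', hsub α]
    exact h
  have hpt2 : ∀ α ∈ Set.Icc (0 : ℝ) (2 * π),
      ((Complex.exp (↑α * Complex.I) * w).re) ^ 2 ≤ 2 * (g α + g (α + π)) := by
    intro α _
    have h := (ptwise ((Complex.exp (↑α * Complex.I) * z).re)
      ((Complex.exp (↑α * Complex.I) * z').re)).2
    simp only [hg]
    rw [hre α z, hre α z', hsub α]
    exact h
  have h2pi : (0 : ℝ) ≤ 2 * π := by positivity
  have hup : 2 * I0 ≤ π * ‖w‖ ^ 2 := by
    rw [← hsum, ← hJ]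
    exact intervalIntegral.integral_mono_on h2pi (hgi.add hgi') hJi hpt1
  have hlo : π * ‖w‖ ^ 2 ≤ 4 * I0 := by
    have : (∫ α in (0 : ℝ)..(2 * π), 2 * (g α + g (α + π))) = 4 * I0 := by
      rw [intervalIntegral.integral_const_mul, hsum]; ring
    rw [← this, ← hJ]
    exact intervalIntegral.integral_mono_on h2pi hJi ((hgi.add hgi').const_mul 2) hpt2
  have hpipos : (0 : ℝ) < π := Real.pi_pos
  rw [habs]
  have heq : 1 / (2 * π) * I0 = I0 / (2 * π) := by ring
  constructor
  · rw [heq, le_div_iff₀ (by positivity)]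
    nlinarith
  · rw [heq, div_le_iff₀ (by positivity)]
    nlinarith
end

section
/- The phase harmonic map z ↦ [z]^k, where [z]^k = |z| e^{i k φ(z)} with φ(z) the argument of z (and [0]^k = 0), is Lipschitz on ℂ with constant max(|k|, 1): for all complex z, z', |[z]^k - [z']^k| ≤ max(|k|,1) |z - z'|. -/
open Complex

lemma abs_sin_nat_mul_le (n : ℕ) (x : ℝ) : |Real.sin (n * x)| ≤ n * |Real.sin x| := by
  induction n with
  | zero => simp
  | succ n ih =>
    have h : Real.sin ((n + 1 : ℕ) * x) = Real.sin (n * x) * Real.cos x + Real.cos (n * x) * Real.sin x := by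
      push_cast
      rw [add_mul, one_mul, Real.sin_add]
    rw [h]
    calc |Real.sin (n * x) * Real.cos x + Real.cos (n * x) * Real.sin x|
        ≤ |Real.sin (n * x) * Real.cos x| + |Real.cos (n * x) * Real.sin x| := abs_add_le _ _
      _ ≤ n * |Real.sin x| + 1 * |Real.sin x| := by
          gcongr
          · rw [abs_mul]
            calc |Real.sin (n * x)| * |Real.cos x| ≤ |Real.sin (n * x)| * 1 := by
                  gcongr; exact Real.abs_cos_le_one x
              _ = |Real.sin (n * x)| := mul_one _
              _ ≤ n * |Real.sin x| := ih
          · rw [abs_mul, one_mul]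
            calc |Real.cos (n * x)| * |Real.sin x| ≤ 1 * |Real.sin x| := by
                  gcongr; exact Real.abs_cos_le_one _
              _ = |Real.sin x| := one_mul _
      _ = (n + 1 : ℕ) * |Real.sin x| := by push_cast; ring

lemma abs_sin_int_mul_le (k : ℤ) (x : ℝ) : |Real.sin ((k:ℝ) * x)| ≤ |(k:ℝ)| * |Real.sin x| := by
  rcases le_or_gt 0 k with h | h
  · lift k to ℕ using h
    push_cast
    rw [_root_.abs_of_nonneg (by positivity : (0:ℝ) ≤ (k:ℝ))]
    exact abs_sin_nat_mul_le k x
  · obtain ⟨n, rfl⟩ : ∃ n : ℕ, k = -n := ⟨k.natAbs, by omega⟩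
    push_cast
    rw [neg_mul, Real.sin_neg, abs_neg, abs_neg, _root_.abs_of_nonneg (by positivity : (0:ℝ) ≤ (n:ℝ))]
    exact abs_sin_nat_mul_le n x

lemma cos_eq_half (θ : ℝ) : Real.cos θ = 1 - 2 * Real.sin (θ/2) ^ 2 := by
  have h := Real.cos_two_mul' (θ/2)
  rw [show 2*(θ/2) = θ by ring] at h
  nlinarith [Real.sin_sq_add_cos_sq (θ/2)]

lemma abs_sub_exp_sq (r r' α β : ℝ) :
    ‖(r : ℂ) * Complex.exp (α * Complex.I) - (r' : ℂ) * Complex.exp (β * Complex.I)‖ ^ 2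
      = r ^ 2 + r' ^ 2 - 2 * r * r' * Real.cos (α - β) := by
  rw [Complex.sq_norm, Complex.normSq_apply]
  simp only [Complex.exp_mul_I, Complex.sub_re, Complex.sub_im, Complex.mul_re, Complex.mul_im,
    Complex.add_re, Complex.add_im, Complex.ofReal_re, Complex.ofReal_im, Complex.cos_ofReal_re,
    Complex.sin_ofReal_re, Complex.mul_I_re, Complex.mul_I_im, Real.cos_sub]
  push_cast
  simp [Complex.cos_ofReal_im, Complex.sin_ofReal_im]
  nlinarith [Real.sin_sq_add_cos_sq α, Real.sin_sq_add_cos_sq β]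

/-- The phase harmonic `[z]^k = |z| e^{i k φ(z)}`, with `[0]^k = 0`
    (automatic since `arg 0 = 0` and `|0| = 0`). -/
noncomputable def phaseHarmonic (k : ℤ) (z : ℂ) : ℂ :=
  (‖z‖ : ℂ) * Complex.exp ((k : ℂ) * (Complex.arg z : ℂ) * Complex.I)

theorem phaseHarmonic_lipschitz (k : ℤ) (z z' : ℂ) :
    ‖phaseHarmonic k z - phaseHarmonic k z'‖ ≤
      max (|k| : ℝ) 1 * ‖z - z'‖ := by
  set r := ‖z‖ with hr
  set r' := ‖z'‖ with hr'
  set α := Complex.arg z with hα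
  set β := Complex.arg z' with hβ
  set M : ℝ := max (|k| : ℝ) 1 with hM
  have hM1 : (1:ℝ) ≤ M := le_max_right _ _
  have hMk : (|k| : ℝ) ≤ M := le_max_left _ _
  have hr0 : 0 ≤ r := norm_nonneg z
  have hr'0 : 0 ≤ r' := norm_nonneg z'
  -- rewrite z, z' in polar form
  have hz : z = (r : ℂ) * Complex.exp (α * Complex.I) := (Complex.norm_mul_exp_arg_mul_I z).symm
  have hz' : z' = (r' : ℂ) * Complex.exp (β * Complex.I) := (Complex.norm_mul_exp_arg_mul_I z').symm
  have h1 : ‖phaseHarmonic k z - phaseHarmonic k z'‖ ^ 2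
      = r ^ 2 + r' ^ 2 - 2 * r * r' * Real.cos (k * α - k * β) := by
    have e1 : phaseHarmonic k z = (r : ℂ) * Complex.exp (((k : ℝ) * α : ℝ) * Complex.I) := by
      simp only [phaseHarmonic, ← hr, ← hα]
      push_cast
      ring_nf
    have e2 : phaseHarmonic k z' = (r' : ℂ) * Complex.exp (((k : ℝ) * β : ℝ) * Complex.I) := by
      simp only [phaseHarmonic, ← hr', ← hβ]
      push_cast
      ring_nf
    rw [e1, e2, abs_sub_exp_sq]
  have h2 : ‖z - z'‖ ^ 2 = r ^ 2 + r' ^ 2 - 2 * r * r' * Real.cos (α - β) := by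
    rw [hz, hz', abs_sub_exp_sq]
  -- half-angle rewriting
  have c1 : Real.cos ((k:ℝ) * α - (k:ℝ) * β) = 1 - 2 * Real.sin ((k:ℝ) * ((α - β)/2)) ^ 2 := by
    rw [cos_eq_half, show ((k:ℝ)*α - (k:ℝ)*β)/2 = (k:ℝ) * ((α - β)/2) by ring]
  have c2 : Real.cos (α - β) = 1 - 2 * Real.sin ((α - β)/2) ^ 2 := cos_eq_half _
  have hs : |Real.sin ((k:ℝ) * ((α - β)/2))| ≤ |(k:ℝ)| * |Real.sin ((α - β)/2)| :=
    abs_sin_int_mul_le k ((α - β)/2)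
  have hs2 : Real.sin ((k:ℝ) * ((α - β)/2)) ^ 2 ≤ M ^ 2 * Real.sin ((α - β)/2) ^ 2 := by
    have h' : |Real.sin ((k:ℝ) * ((α - β)/2))| ≤ M * |Real.sin ((α - β)/2)| := by
      calc |Real.sin ((k:ℝ) * ((α - β)/2))| ≤ |(k:ℝ)| * |Real.sin ((α - β)/2)| := hs
        _ ≤ M * |Real.sin ((α - β)/2)| := by gcongr
    nlinarith [abs_nonneg (Real.sin ((k:ℝ) * ((α - β)/2))), _root_.sq_abs (Real.sin ((k:ℝ) * ((α - β)/2))), _root_.sq_abs (Real.sin ((α - β)/2)), abs_nonneg (Real.sin ((α - β)/2))]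
  -- compare squares
  have hsq : ‖phaseHarmonic k z - phaseHarmonic k z'‖ ^ 2
      ≤ (M * ‖z - z'‖) ^ 2 := by
    have hM2 : (1:ℝ) ≤ M ^ 2 := by nlinarith
    rw [h1, mul_pow, h2, c2]
    rw [show Real.cos ((k:ℤ) * α - (k:ℤ) * β) = Real.cos ((k:ℝ) * α - (k:ℝ) * β) by push_cast; ring_nf, c1]
    nlinarith [mul_le_mul_of_nonneg_left hs2 (by positivity : (0:ℝ) ≤ 4*(r*r')), sq_nonneg (r - r'), mul_nonneg hr0 hr'0, sq_nonneg (Real.sin ((α-β)/2)), hM2]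
  have habs : 0 ≤ ‖phaseHarmonic k z - phaseHarmonic k z'‖ := norm_nonneg _
  have hMB : 0 ≤ M * ‖z - z'‖ := by positivity
  nlinarith [hsq, habs, hMB]
end

section
/- Let R : ℝ^d → ℂ^n be a map satisfying the bi-Lipschitz bounds A‖x - x'‖² ≤ ‖R(x) - R(x')‖² ≤ B‖x - x'‖² for all x, x'. Then for any square-integrable random vector X in ℝ^d, A·σ²(X) ≤ σ²(R(X)) ≤ B·σ²(X), where σ²(Z) = E[‖Z - E(Z)‖²]. -/
open MeasureTheory

open scoped RealInnerProductSpace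

/-- `σ²(Z) = E[‖Z − E Z‖²]`, the trace of the covariance of `Z`. -/
noncomputable def varVec {Ω : Type*} [MeasurableSpace Ω] (μ : Measure Ω)
    {E : Type*} [NormedAddCommGroup E] [NormedSpace ℝ E] (Z : Ω → E) : ℝ :=
  ∫ ω, ‖Z ω - ∫ ω', Z ω' ∂μ‖ ^ 2 ∂μ

lemma pair_key {Ω : Type*} [MeasurableSpace Ω] (μ : Measure Ω) [IsProbabilityMeasure μ]
    {E : Type*} [NormedAddCommGroup E] [InnerProductSpace ℝ E] [CompleteSpace E]
    (Z : Ω → E) (hZ : MemLp Z 2 μ) :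
    Integrable (fun p : Ω × Ω => ‖Z p.1 - Z p.2‖ ^ 2) (μ.prod μ) ∧
      ∫ p : Ω × Ω, ‖Z p.1 - Z p.2‖ ^ 2 ∂(μ.prod μ) = 2 * varVec μ Z := by
  set m : E := ∫ ω, Z ω ∂μ with hm
  set W : Ω → E := fun ω => Z ω - m with hWdef
  have hZint : Integrable Z μ := hZ.integrable one_le_two
  have hWm : MemLp W 2 μ := hZ.sub (memLp_const m)
  have hWint : Integrable W μ := hWm.integrable one_le_two
  have hW0 : ∫ ω, W ω ∂μ = 0 := by
    simp only [hWdef]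
    rw [integral_sub hZint (integrable_const m)]
    simp [hm]
  have hsq : Integrable (fun ω => ‖W ω‖ ^ 2) μ :=
    (memLp_two_iff_integrable_sq_norm hWm.1).mp hWm
  have mpf : MeasurePreserving (Prod.fst : Ω × Ω → Ω) (μ.prod μ) μ :=
    ⟨measurable_fst, by simp⟩
  have mps : MeasurePreserving (Prod.snd : Ω × Ω → Ω) (μ.prod μ) μ :=
    ⟨measurable_snd, by simp⟩
  have I1 : Integrable (fun p : Ω × Ω => ‖W p.1‖ ^ 2) (μ.prod μ) :=
    memLp_one_iff_integrable.mp
      (((memLp_one_iff_integrable.mpr hsq).comp_measurePreserving mpf))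
  have I2 : Integrable (fun p : Ω × Ω => ‖W p.2‖ ^ 2) (μ.prod μ) :=
    memLp_one_iff_integrable.mp
      (((memLp_one_iff_integrable.mpr hsq).comp_measurePreserving mps))
  have hWmeas1 : AEStronglyMeasurable (fun p : Ω × Ω => W p.1) (μ.prod μ) :=
    hWm.1.comp_measurePreserving mpf
  have hWmeas2 : AEStronglyMeasurable (fun p : Ω × Ω => W p.2) (μ.prod μ) :=
    hWm.1.comp_measurePreserving mps
  have Icross : Integrable (fun p : Ω × Ω => ⟪W p.1, W p.2⟫) (μ.prod μ) := by
    have hb : Integrable (fun p : Ω × Ω => ‖W p.1‖ * ‖W p.2‖) (μ.prod μ) :=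
      hWint.norm.mul_prod hWint.norm
    refine hb.mono' (hWmeas1.inner hWmeas2) ?_
    filter_upwards with p
    rw [Real.norm_eq_abs]
    exact abs_real_inner_le_norm _ _
  have hpt : ∀ p : Ω × Ω,
      ‖Z p.1 - Z p.2‖ ^ 2 = ‖W p.1‖ ^ 2 - 2 * ⟪W p.1, W p.2⟫ + ‖W p.2‖ ^ 2 := by
    intro p
    have : Z p.1 - Z p.2 = W p.1 - W p.2 := by simp [hWdef]
    rw [this, norm_sub_sq_real]
  have Itot : Integrable (fun p : Ω × Ω => ‖Z p.1 - Z p.2‖ ^ 2) (μ.prod μ) := by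
    have := ((I1.sub (Icross.const_mul 2)).add I2)
    refine this.congr ?_
    filter_upwards with p
    exact (hpt p).symm
  refine ⟨Itot, ?_⟩
  have hvv : varVec μ Z = ∫ ω, ‖W ω‖ ^ 2 ∂μ := rfl
  calc ∫ p : Ω × Ω, ‖Z p.1 - Z p.2‖ ^ 2 ∂(μ.prod μ)
      = ∫ p : Ω × Ω, (‖W p.1‖ ^ 2 - 2 * ⟪W p.1, W p.2⟫ + ‖W p.2‖ ^ 2) ∂(μ.prod μ) := by
        congr 1; funext p; exact hpt p
    _ = (∫ p : Ω × Ω, ‖W p.1‖ ^ 2 ∂(μ.prod μ))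
          - 2 * (∫ p : Ω × Ω, ⟪W p.1, W p.2⟫ ∂(μ.prod μ))
          + ∫ p : Ω × Ω, ‖W p.2‖ ^ 2 ∂(μ.prod μ) := by
        have Ic2 : Integrable (fun p : Ω × Ω => 2 * ⟪W p.1, W p.2⟫) (μ.prod μ) :=
          Icross.const_mul 2
        have Isub : Integrable
            (fun p : Ω × Ω => ‖W p.1‖ ^ 2 - 2 * ⟪W p.1, W p.2⟫) (μ.prod μ) := I1.sub Ic2
        rw [integral_add Isub I2, integral_sub I1 Ic2, integral_const_mul]
    _ = 2 * varVec μ Z := by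
        have h1 : ∫ p : Ω × Ω, ‖W p.1‖ ^ 2 ∂(μ.prod μ) = ∫ ω, ‖W ω‖ ^ 2 ∂μ := by
          rw [integral_fun_fst (f := fun ω => ‖W ω‖ ^ 2)]; simp
        have h2 : ∫ p : Ω × Ω, ‖W p.2‖ ^ 2 ∂(μ.prod μ) = ∫ ω, ‖W ω‖ ^ 2 ∂μ := by
          rw [integral_fun_snd (f := fun ω => ‖W ω‖ ^ 2)]; simp
        have h3 : ∫ p : Ω × Ω, ⟪W p.1, W p.2⟫ ∂(μ.prod μ) = 0 := by
          rw [integral_prod _ Icross]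
          have : ∀ x, ∫ y, ⟪W x, W y⟫ ∂μ = 0 := by
            intro x
            rw [integral_inner hWint, hW0, inner_zero_right]
          simp [this]
        rw [h1, h2, h3, hvv]; ring

theorem biLipschitz_variance_bounds {d n : ℕ}
    {Ω : Type*} [MeasurableSpace Ω] (μ : Measure Ω) [IsProbabilityMeasure μ]
    (R : EuclideanSpace ℝ (Fin d) → EuclideanSpace ℂ (Fin n))
    (A B : ℝ) (hA : 0 < A) (hB : 0 < B)
    (hbl : ∀ x x' : EuclideanSpace ℝ (Fin d),
      A * ‖x - x'‖ ^ 2 ≤ ‖R x - R x'‖ ^ 2 ∧ ‖R x - R x'‖ ^ 2 ≤ B * ‖x - x'‖ ^ 2)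
    (X : Ω → EuclideanSpace ℝ (Fin d)) (hX : MemLp X 2 μ) :
    A * varVec μ X ≤ varVec μ (fun ω => R (X ω)) ∧
      varVec μ (fun ω => R (X ω)) ≤ B * varVec μ X := by
  set sB := Real.sqrt B with hsB
  have hsBnn : 0 ≤ sB := Real.sqrt_nonneg B
  have hRlip : ∀ x y, ‖R x - R y‖ ≤ sB * ‖x - y‖ := by
    intro x y
    have h := (hbl x y).2
    calc ‖R x - R y‖ = Real.sqrt (‖R x - R y‖ ^ 2) := by
          rw [Real.sqrt_sq (norm_nonneg _)]
      _ ≤ Real.sqrt (B * ‖x - y‖ ^ 2) := Real.sqrt_le_sqrt h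
      _ = sB * ‖x - y‖ := by
          rw [Real.sqrt_mul hB.le, Real.sqrt_sq (norm_nonneg _)]
  have hRcont : Continuous R := by
    have : LipschitzWith sB.toNNReal R :=
      LipschitzWith.of_dist_le_mul (fun x y => by
        rw [dist_eq_norm, dist_eq_norm]
        simpa [Real.coe_toNNReal _ hsBnn] using hRlip x y)
    exact this.continuous
  have hRX : MemLp (fun ω => R (X ω)) 2 μ := by
    have hmeas : AEStronglyMeasurable (fun ω => R (X ω)) μ :=
      hRcont.comp_aestronglyMeasurable hX.1
    have hg : MemLp (fun ω => ‖R 0‖ + sB * ‖X ω‖) 2 μ :=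
      by have h1 : MemLp (fun _ : Ω => ‖R 0‖) 2 μ := memLp_const _; have h2 : MemLp (fun ω => sB * ‖X ω‖) 2 μ := hX.norm.const_mul sB; exact h1.add h2
    refine hg.of_le hmeas ?_
    filter_upwards with ω
    have h1 : ‖R (X ω)‖ ≤ ‖R 0‖ + sB * ‖X ω‖ := by
      have := hRlip (X ω) 0
      have h2 : ‖R (X ω)‖ ≤ ‖R (X ω) - R 0‖ + ‖R 0‖ := by
        simpa using norm_add_le (R (X ω) - R 0) (R 0)
      simp only [sub_zero] at this
      linarith
    have hgnn : 0 ≤ ‖R 0‖ + sB * ‖X ω‖ :=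
      add_nonneg (norm_nonneg _) (mul_nonneg hsBnn (norm_nonneg _))
    rw [Real.norm_eq_abs, abs_of_nonneg hgnn]
    exact h1
  obtain ⟨IX, EX⟩ := pair_key μ X hX
  obtain ⟨IR, ER⟩ := pair_key μ (fun ω => R (X ω)) hRX
  constructor
  · have hmono : ∫ p : Ω × Ω, A * ‖X p.1 - X p.2‖ ^ 2 ∂(μ.prod μ)
        ≤ ∫ p : Ω × Ω, ‖R (X p.1) - R (X p.2)‖ ^ 2 ∂(μ.prod μ) :=
      integral_mono (IX.const_mul A) IR (fun p => (hbl (X p.1) (X p.2)).1)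
    rw [integral_const_mul, EX, ER] at hmono
    linarith
  · have hmono : ∫ p : Ω × Ω, ‖R (X p.1) - R (X p.2)‖ ^ 2 ∂(μ.prod μ)
        ≤ ∫ p : Ω × Ω, B * ‖X p.1 - X p.2‖ ^ 2 ∂(μ.prod μ) :=
      integral_mono IR (IX.const_mul B) (fun p => (hbl (X p.1) (X p.2)).2)
    rw [integral_const_mul, EX, ER] at hmono
    linarith
end
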